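/- Predictive dependence beyond (n, k): consider the mixed three-parameter beta model Ψ | α ~ PP(γ s^{-1-α}(1-s)^{β+α-1} 1_{(0,1]}(s) ds G_0(dx)) with γ > 0, β > 0, and α ~ π_α supported on (0,1). Then the posterior density of α given a sample of size n with k distinct features of multiplicities m_1,…,m_k is π_{α|Z}(da) ∝ exp(−γ ∑_{h=0}^{n-1} B(1−a, h+β+a)) ∏_{ℓ=1}^k B(m_ℓ − a, n − m_ℓ + β + a) π_α(da). Consequently, if π_α is non-degenerate, this posterior (and hence the predictive law of the new-feature process) genuinely depends on the multiplicities m_1,…,m_k, not only on n and k. -/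

import Mathlib

open MeasureTheory
open scoped ENNReal

/-- Euler's beta function `B(x,y) = ∫₀¹ t^{x-1}(1-t)^{y-1} dt`. -/
noncomputable def eulerBeta (x y : ℝ) : ℝ :=
  ∫ t in Set.Ioo (0:ℝ) 1, t ^ (x - 1) * (1 - t) ^ (y - 1)

lemma eulerBeta_nonneg (x y : ℝ) : 0 ≤ eulerBeta x y := by
  apply setIntegral_nonneg measurableSet_Ioo
  intro t ht
  exact mul_nonneg (Real.rpow_nonneg ht.1.le _) (Real.rpow_nonneg (by linarith [ht.2]) _)

lemma integrableOn_betaFn {x y : ℝ} (hx : 0 < x) (hy : 0 < y) :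
    IntegrableOn (fun t : ℝ => t ^ (x - 1) * (1 - t) ^ (y - 1)) (Set.Ioo 0 1) := by
  have h := (Complex.betaIntegral_convergent (u := (x:ℂ)) (v := (y:ℂ))
    (by simpa using hx) (by simpa using hy)).norm
  have h1 : IntegrableOn (fun t : ℝ => ‖(t : ℂ) ^ ((x:ℂ) - 1) * (1 - (t:ℂ)) ^ ((y:ℂ) - 1)‖)
      (Set.Ioo 0 1) := h.1.mono_set Set.Ioo_subset_Ioc_self
  apply h1.congr_fun ?_ measurableSet_Ioo
  intro t ht
  have h1t : (0:ℝ) < 1 - t := by linarith [ht.2]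
  simp only []
  rw [norm_mul]
  rw [Complex.norm_cpow_eq_rpow_re_of_pos ht.1, show ((1:ℂ) - (t:ℂ)) = ((1 - t : ℝ) : ℂ) by push_cast; ring,
    Complex.norm_cpow_eq_rpow_re_of_pos h1t]
  simp [Complex.sub_re]

lemma eulerBeta_eq_complex {x y : ℝ} (hx : 0 < x) (hy : 0 < y) :
    ((eulerBeta x y : ℝ) : ℂ) = Complex.betaIntegral x y := by
  rw [Complex.betaIntegral, intervalIntegral.integral_of_le zero_le_one,
    MeasureTheory.integral_Ioc_eq_integral_Ioo, eulerBeta]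
  have hco : ((∫ t in Set.Ioo (0:ℝ) 1, t ^ (x - 1) * (1 - t) ^ (y - 1) : ℝ) : ℂ)
      = ∫ t in Set.Ioo (0:ℝ) 1, ((t ^ (x - 1) * (1 - t) ^ (y - 1) : ℝ) : ℂ) :=
    (integral_ofReal (𝕜 := ℂ)).symm
  rw [hco]
  apply setIntegral_congr_fun measurableSet_Ioo
  intro t ht
  have h1t : (0:ℝ) < 1 - t := by linarith [ht.2]
  push_cast
  rw [Complex.ofReal_cpow ht.1.le, Complex.ofReal_cpow h1t.le]
  push_cast
  ring

lemma eulerBeta_recurrence {x y : ℝ} (hx : 0 < x) (hy : 0 < y) :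
    x * eulerBeta x (y + 1) = y * eulerBeta (x + 1) y := by
  have h := Complex.betaIntegral_recurrence (u := (x:ℂ)) (v := (y:ℂ))
    (by simpa using hx) (by simpa using hy)
  have hx1 : ((x:ℂ)) + 1 = ((x + 1 : ℝ) : ℂ) := by push_cast; ring
  have hy1 : ((y:ℂ)) + 1 = ((y + 1 : ℝ) : ℂ) := by push_cast; ring
  rw [hx1, hy1, ← eulerBeta_eq_complex hx (by linarith), ← eulerBeta_eq_complex (by linarith) hy]
    at h
  exact_mod_cast h

lemma eulerBeta_pos {x y : ℝ} (hx : 0 < x) (hy : 0 < y) : 0 < eulerBeta x y := by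
  rw [eulerBeta]
  rw [setIntegral_pos_iff_support_of_nonneg_ae ?pos (integrableOn_betaFn hx hy)]
  case pos =>
    filter_upwards [ae_restrict_mem measurableSet_Ioo] with t ht
    exact mul_nonneg (Real.rpow_nonneg ht.1.le _) (Real.rpow_nonneg (by linarith [ht.2]) _)
  · have hsub : Set.Ioo (0:ℝ) 1 ⊆
        Function.support (fun t : ℝ => t ^ (x - 1) * (1 - t) ^ (y - 1)) ∩ Set.Ioo 0 1 := by
      intro t ht
      refine ⟨?_, ht⟩
      have h1t : (0:ℝ) < 1 - t := by linarith [ht.2]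
      exact (mul_pos (Real.rpow_pos_of_pos ht.1 _) (Real.rpow_pos_of_pos h1t _)).ne'
    calc (0:ℝ≥0∞) < volume (Set.Ioo (0:ℝ) 1) := by simp
      _ ≤ _ := measure_mono hsub

lemma eulerBeta_le {x x' y y' : ℝ} (hx : 0 < x) (hy : 0 < y) (hxx : x ≤ x') (hyy : y ≤ y') :
    eulerBeta x' y' ≤ eulerBeta x y := by
  apply setIntegral_mono_on (integrableOn_betaFn (lt_of_lt_of_le hx hxx) (lt_of_lt_of_le hy hyy))
    (integrableOn_betaFn hx hy) measurableSet_Ioo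
  intro t ht
  have h1t : (0:ℝ) < 1 - t := by linarith [ht.2]
  apply mul_le_mul
  · exact Real.rpow_le_rpow_of_exponent_ge ht.1 ht.2.le (by linarith)
  · exact Real.rpow_le_rpow_of_exponent_ge h1t (by linarith [ht.1]) (by linarith)
  · exact Real.rpow_nonneg h1t.le _
  · exact Real.rpow_nonneg ht.1.le _

lemma measurable_eulerBeta_comp {f g : ℝ → ℝ} (hf : Measurable f) (hg : Measurable g) :
    Measurable fun a => eulerBeta (f a) (g a) := by
  have hF : StronglyMeasurable fun p : ℝ × ℝ =>
      Real.exp (Real.log p.2 * (f p.1 - 1)) * Real.exp (Real.log (1 - p.2) * (g p.1 - 1)) := by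
    apply Measurable.stronglyMeasurable
    exact ((Real.measurable_log.comp measurable_snd).mul
        ((hf.comp measurable_fst).sub measurable_const)).exp.mul
      ((Real.measurable_log.comp (measurable_const.sub measurable_snd)).mul
        ((hg.comp measurable_fst).sub measurable_const)).exp
  have key := (hF.integral_prod_right' (ν := volume.restrict (Set.Ioo 0 1))).measurable
  have : (fun a => eulerBeta (f a) (g a)) = fun a => ∫ t in Set.Ioo (0:ℝ) 1,
      Real.exp (Real.log t * (f a - 1)) * Real.exp (Real.log (1 - t) * (g a - 1)) := by
    funext a
    apply setIntegral_congr_fun measurableSet_Ioo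
    intro t ht
    simp only []
    rw [Real.rpow_def_of_pos ht.1, Real.rpow_def_of_pos (by linarith [ht.2] : (0:ℝ) < 1 - t)]
  rw [this]
  exact key


/-- Proposition 5.1: under the mixed three-parameter beta model
`Ψ | α ~ PP(γ s^{-1-α}(1-s)^{β+α-1} 1_{(0,1]}(s) ds G₀(dx))`, `α ~ π_α` on `(0,1)`, the
marginal likelihood of a sample of size `n` with `k` distinct features of multiplicities
`m₁,…,m_k` given `α = a` is proportional to
`L(m, a) = exp(-γ ∑_{h<n} B(1-a, h+β+a)) ∏_ℓ B(m_ℓ - a, n - m_ℓ + β + a)`, so the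
posterior of `α` is `π_{α|Z}(da) ∝ L(m, a) π_α(da)` (first conjunct).  Consequently, if
`π_α` is non-degenerate, the posterior — and hence the predictive law of the
new-feature process — genuinely depends on the multiplicities, not only on `(n, k)`
(second conjunct). -/
theorem stmt_17 (γ β : ℝ) (hγ : 0 < γ) (hβ : 0 < β)
    (π : Measure ℝ) [IsProbabilityMeasure π] (hπ : π (Set.Ioo (0:ℝ) 1) = 1)
    (n k : ℕ) (hn : 2 ≤ n) (hk : 1 ≤ k)
    (L : (Fin k → ℕ) → ℝ → ℝ)
    (hL : ∀ m a, L m a =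
      Real.exp (-γ * ∑ h ∈ Finset.range n, eulerBeta (1 - a) ((h : ℝ) + β + a)) *
        ∏ ℓ : Fin k, eulerBeta ((m ℓ : ℝ) - a) ((n : ℝ) - m ℓ + β + a))
    (post : (Fin k → ℕ) → Measure ℝ)
    (hpost : ∀ m, post m =
      (∫⁻ a, ENNReal.ofReal (L m a) ∂π)⁻¹ •
        π.withDensity (fun a => ENNReal.ofReal (L m a))) :
    (∀ m : Fin k → ℕ, (∀ ℓ, 1 ≤ m ℓ ∧ m ℓ ≤ n) →
      ∀ A : Set ℝ, MeasurableSet A →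
        post m A * ∫⁻ a, ENNReal.ofReal (L m a) ∂π
          = ∫⁻ a in A, ENNReal.ofReal (L m a) ∂π) ∧
    ((¬ ∃ a₀ : ℝ, π = Measure.dirac a₀) →
      ∃ m m' : Fin k → ℕ, (∀ ℓ, 1 ≤ m ℓ ∧ m ℓ ≤ n) ∧ (∀ ℓ, 1 ≤ m' ℓ ∧ m' ℓ ≤ n) ∧
        post m ≠ post m') := by
  have hn2 : (2:ℝ) ≤ (n:ℝ) := by exact_mod_cast hn
  -- measurability of L m
  have hmeasL : ∀ m : Fin k → ℕ, Measurable (L m) := by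
    intro m
    have : L m = fun a =>
        Real.exp (-γ * ∑ h ∈ Finset.range n, eulerBeta (1 - a) ((h : ℝ) + β + a)) *
          ∏ ℓ : Fin k, eulerBeta ((m ℓ : ℝ) - a) ((n : ℝ) - m ℓ + β + a) := funext (hL m)
    rw [this]
    have hsum : Measurable fun a : ℝ =>
        ∑ h ∈ Finset.range n, eulerBeta (1 - a) ((h : ℝ) + β + a) := by
      apply Finset.measurable_sum
      intro h _
      exact measurable_eulerBeta_comp (measurable_const.sub measurable_id)
        (measurable_const.add measurable_id)
    have hprod : Measurable fun a : ℝ =>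
        ∏ ℓ : Fin k, eulerBeta ((m ℓ : ℝ) - a) ((n : ℝ) - m ℓ + β + a) := by
      apply Finset.measurable_prod
      intro ℓ _
      exact measurable_eulerBeta_comp (measurable_const.sub measurable_id)
        (measurable_const.add measurable_id)
    exact (Real.measurable_exp.comp (measurable_const.mul hsum)).mul hprod
  -- positivity and boundedness of L on (0,1)
  have hLpos : ∀ m : Fin k → ℕ, (∀ ℓ, 1 ≤ m ℓ ∧ m ℓ ≤ n) →
      ∀ a ∈ Set.Ioo (0:ℝ) 1, 0 < L m a := by
    intro m hm a ha
    rw [hL]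
    apply mul_pos (Real.exp_pos _)
    apply Finset.prod_pos
    intro ℓ _
    have h1 : (1:ℝ) ≤ (m ℓ : ℝ) := by exact_mod_cast (hm ℓ).1
    have h2 : (m ℓ : ℝ) ≤ (n:ℝ) := by exact_mod_cast (hm ℓ).2
    exact eulerBeta_pos (by linarith [ha.2]) (by linarith [ha.1])
  have hLbdd : ∀ m : Fin k → ℕ, (∀ ℓ, 1 ≤ m ℓ ∧ m ℓ ≤ n) →
      ∀ a ∈ Set.Ioo (0:ℝ) 1, L m a ≤ ((k:ℝ)/γ)^k := by
    intro m hm a ha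
    set S := eulerBeta (1 - a) (β + a) with hSdef
    have hS : 0 < S := eulerBeta_pos (by linarith [ha.2]) (by linarith [ha.1])
    have hsum : S ≤ ∑ h ∈ Finset.range n, eulerBeta (1 - a) ((h : ℝ) + β + a) := by
      have h0 : (0:ℕ) ∈ Finset.range n := Finset.mem_range.2 (by omega)
      have := Finset.single_le_sum
        (f := fun h : ℕ => eulerBeta (1 - a) ((h : ℝ) + β + a))
        (fun i _ => eulerBeta_nonneg _ _) h0
      simpa using this
    have hfac : ∀ ℓ : Fin k, eulerBeta ((m ℓ : ℝ) - a) ((n : ℝ) - m ℓ + β + a) ≤ S := by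
      intro ℓ
      have h1 : (1:ℝ) ≤ (m ℓ : ℝ) := by exact_mod_cast (hm ℓ).1
      have h2 : (m ℓ : ℝ) ≤ (n:ℝ) := by exact_mod_cast (hm ℓ).2
      exact eulerBeta_le (by linarith [ha.2]) (by linarith [ha.1]) (by linarith) (by linarith)
    have hprod : ∏ ℓ : Fin k, eulerBeta ((m ℓ : ℝ) - a) ((n : ℝ) - m ℓ + β + a) ≤ S ^ k := by
      calc ∏ ℓ : Fin k, eulerBeta ((m ℓ : ℝ) - a) ((n : ℝ) - m ℓ + β + a)
          ≤ ∏ _ℓ : Fin k, S := by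
            apply Finset.prod_le_prod
            · intro i _; exact eulerBeta_nonneg _ _
            · intro i _; exact hfac i
        _ = S ^ k := by simp
    have hexp : Real.exp (-γ * ∑ h ∈ Finset.range n, eulerBeta (1 - a) ((h : ℝ) + β + a))
        ≤ Real.exp (-(γ * S)) := by
      apply Real.exp_le_exp.2
      have : γ * S ≤ γ * ∑ h ∈ Finset.range n, eulerBeta (1 - a) ((h : ℝ) + β + a) :=
        mul_le_mul_of_nonneg_left hsum hγ.le
      linarith
    have hstep : L m a ≤ Real.exp (-(γ * S)) * S ^ k := by
      rw [hL]
      apply mul_le_mul hexp hprod ?_ (Real.exp_pos _).le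
      exact Finset.prod_nonneg fun i _ => eulerBeta_nonneg _ _
    refine hstep.trans ?_
    -- exp(-(γS)) * S^k ≤ (k/γ)^k
    have hu : (0:ℝ) ≤ γ * S := by positivity
    have hk0 : (0:ℝ) < (k:ℝ) := by exact_mod_cast hk
    have hle : γ * S ≤ (k:ℝ) * Real.exp (γ * S / k) := by
      have h1 : γ * S / k ≤ Real.exp (γ * S / k) := by
        nlinarith [Real.add_one_le_exp (γ * S / k)]
      calc γ * S = (k:ℝ) * (γ * S / k) := by field_simp
        _ ≤ (k:ℝ) * Real.exp (γ * S / k) := by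
            exact mul_le_mul_of_nonneg_left h1 hk0.le
    have hpow : (γ * S) ^ k ≤ (k:ℝ) ^ k * Real.exp (γ * S) := by
      calc (γ * S) ^ k ≤ ((k:ℝ) * Real.exp (γ * S / k)) ^ k := pow_le_pow_left₀ hu hle k
        _ = (k:ℝ) ^ k * Real.exp (γ * S / k) ^ k := mul_pow _ _ _
        _ = (k:ℝ) ^ k * Real.exp (γ * S) := by
            rw [← Real.exp_nat_mul]
            congr 1
            field_simp
    have hSk : S ^ k = (γ * S) ^ k / γ ^ k := by
      rw [mul_pow]; field_simp
    rw [hSk, div_pow, Real.exp_neg]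
    have hfin : (Real.exp (γ * S))⁻¹ * ((k:ℝ) ^ k * Real.exp (γ * S) / γ ^ k)
        = (k:ℝ) ^ k / γ ^ k := by
      field_simp
    calc (Real.exp (γ * S))⁻¹ * ((γ * S) ^ k / γ ^ k)
        ≤ (Real.exp (γ * S))⁻¹ * ((k:ℝ) ^ k * Real.exp (γ * S) / γ ^ k) := by
          gcongr
      _ = (k:ℝ) ^ k / γ ^ k := hfin
  -- a.e. membership in (0,1)
  have haemem : ∀ᵐ a ∂π, a ∈ Set.Ioo (0:ℝ) 1 := by
    rw [ae_iff]
    have : {a : ℝ | ¬ a ∈ Set.Ioo (0:ℝ) 1} = (Set.Ioo (0:ℝ) 1)ᶜ := rfl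
    rw [this, measure_compl measurableSet_Ioo (measure_ne_top π _), hπ, measure_univ]
    simp
  -- the normalizing constants
  have hZ : ∀ m : Fin k → ℕ, (∀ ℓ, 1 ≤ m ℓ ∧ m ℓ ≤ n) →
      (∫⁻ a, ENNReal.ofReal (L m a) ∂π) ≠ 0 ∧ (∫⁻ a, ENNReal.ofReal (L m a) ∂π) ≠ ∞ := by
    intro m hm
    constructor
    · intro h0
      rw [lintegral_eq_zero_iff (hmeasL m).ennreal_ofReal] at h0
      have hfalse : ∀ᵐ a ∂π, False := by
        filter_upwards [haemem, h0] with a ha hz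
        have : 0 < L m a := hLpos m hm a ha
        simp only [Pi.zero_apply] at hz
        rw [ENNReal.ofReal_eq_zero] at hz
        linarith
      have huniv : π Set.univ = 0 := by simpa using (ae_iff.1 hfalse)
      rw [measure_univ] at huniv
      exact one_ne_zero huniv
    · have hbd : ∀ᵐ a ∂π, ENNReal.ofReal (L m a) ≤ ENNReal.ofReal (((k:ℝ)/γ)^k) := by
        filter_upwards [haemem] with a ha
        exact ENNReal.ofReal_le_ofReal (hLbdd m hm a ha)
      have := lintegral_mono_ae hbd
      rw [lintegral_const, measure_univ, mul_one] at this
      exact (this.trans_lt ENNReal.ofReal_lt_top).ne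
  -- part 1
  have part1 : ∀ m : Fin k → ℕ, (∀ ℓ, 1 ≤ m ℓ ∧ m ℓ ≤ n) →
      ∀ A : Set ℝ, MeasurableSet A →
        post m A * ∫⁻ a, ENNReal.ofReal (L m a) ∂π
          = ∫⁻ a in A, ENNReal.ofReal (L m a) ∂π := by
    intro m hm A hA
    obtain ⟨hZ0, hZt⟩ := hZ m hm
    rw [hpost m, Measure.smul_apply, smul_eq_mul, withDensity_apply _ hA]
    calc (∫⁻ a, ENNReal.ofReal (L m a) ∂π)⁻¹ * (∫⁻ a in A, ENNReal.ofReal (L m a) ∂π)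
          * (∫⁻ a, ENNReal.ofReal (L m a) ∂π)
        = (∫⁻ a in A, ENNReal.ofReal (L m a) ∂π)
            * ((∫⁻ a, ENNReal.ofReal (L m a) ∂π)⁻¹ * (∫⁻ a, ENNReal.ofReal (L m a) ∂π)) := by
          ring
      _ = _ := by rw [ENNReal.inv_mul_cancel hZ0 hZt, mul_one]
  refine ⟨part1, ?_⟩
  intro hnd
  refine ⟨(fun _ => 1), (fun _ => 2), (fun ℓ => ⟨le_refl 1, show 1 ≤ n by omega⟩),
    (fun ℓ => ⟨show 1 ≤ 2 by omega, show 2 ≤ n from hn⟩), ?_⟩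
  intro heq
  apply hnd
  have hb1 : ∀ ℓ : Fin k, 1 ≤ (fun _ : Fin k => 1) ℓ ∧ (fun _ : Fin k => 1) ℓ ≤ n :=
    fun ℓ => ⟨le_refl 1, show 1 ≤ n by omega⟩
  have hb2 : ∀ ℓ : Fin k, 1 ≤ (fun _ : Fin k => 2) ℓ ∧ (fun _ : Fin k => 2) ℓ ≤ n :=
    fun ℓ => ⟨show 1 ≤ 2 by omega, show 2 ≤ n from hn⟩
  obtain ⟨hZ10, hZ1t⟩ := hZ (fun _ => 1) hb1
  obtain ⟨hZ20, hZ2t⟩ := hZ (fun _ => 2) hb2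
  set Z1 := ∫⁻ a, ENNReal.ofReal (L (fun _ => 1) a) ∂π with hZ1def
  set Z2 := ∫⁻ a, ENNReal.ofReal (L (fun _ => 2) a) ∂π with hZ2def
  set c := Z1 * Z2⁻¹ with hcdef
  have hset : ∀ A : Set ℝ, MeasurableSet A →
      ∫⁻ a in A, ENNReal.ofReal (L (fun _ => 1) a) ∂π
        = ∫⁻ a in A, c * ENNReal.ofReal (L (fun _ => 2) a) ∂π := by
    intro A hA
    rw [lintegral_const_mul _ (hmeasL (fun _ => 2)).ennreal_ofReal]
    rw [← part1 (fun _ => 1) hb1 A hA, ← part1 (fun _ => 2) hb2 A hA, heq, hcdef]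
    have h22 : Z2⁻¹ * Z2 = 1 := ENNReal.inv_mul_cancel hZ20 hZ2t
    calc post (fun _ => 2) A * Z1
        = post (fun _ => 2) A * Z1 * (Z2⁻¹ * Z2) := by rw [h22, mul_one]
      _ = Z1 * Z2⁻¹ * (post (fun _ => 2) A * Z2) := by ring
  have haeq : (fun a => ENNReal.ofReal (L (fun _ => 1) a))
      =ᵐ[π] fun a => c * ENNReal.ofReal (L (fun _ => 2) a) :=
    ae_eq_of_forall_setLIntegral_eq_of_sigmaFinite (hmeasL (fun _ => 1)).ennreal_ofReal
      (measurable_const.mul (hmeasL (fun _ => 2)).ennreal_ofReal)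
      (fun s hs _ => hset s hs)
  have hψ : ∀ᵐ a ∂π, a ∈ Set.Ioo (0:ℝ) 1 ∧
      ENNReal.ofReal ((((n:ℝ) - 2 + β + a) / (1 - a)) ^ k) = c := by
    filter_upwards [haemem, haeq] with a ha hfg
    refine ⟨ha, ?_⟩
    have hx : (0:ℝ) < 1 - a := by linarith [ha.2]
    have hy : (0:ℝ) < (n:ℝ) - 2 + β + a := by linarith [ha.1]
    have hB2pos : 0 < eulerBeta (2 - a) ((n:ℝ) - 2 + β + a) :=
      eulerBeta_pos (by linarith) hy
    have hrec : (1 - a) * eulerBeta (1 - a) ((n:ℝ) - 1 + β + a)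
        = ((n:ℝ) - 2 + β + a) * eulerBeta (2 - a) ((n:ℝ) - 2 + β + a) := by
      have h := eulerBeta_recurrence (x := 1 - a) (y := (n:ℝ) - 2 + β + a) hx hy
      rw [show ((n:ℝ) - 2 + β + a) + 1 = (n:ℝ) - 1 + β + a from by ring,
        show (1 - a) + 1 = 2 - a from by ring] at h
      exact h
    have hρ : eulerBeta (1 - a) ((n:ℝ) - 1 + β + a)
        = (((n:ℝ) - 2 + β + a) / (1 - a)) * eulerBeta (2 - a) ((n:ℝ) - 2 + β + a) := by
      rw [div_mul_eq_mul_div, eq_div_iff hx.ne']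
      linarith [hrec]
    have hLm1 : L (fun _ => 1) a =
        Real.exp (-γ * ∑ h ∈ Finset.range n, eulerBeta (1 - a) ((h : ℝ) + β + a)) *
          eulerBeta (1 - a) ((n:ℝ) - 1 + β + a) ^ k := by
      rw [hL]
      congr 1
      simp [Finset.prod_const]
    have hLm2 : L (fun _ => 2) a =
        Real.exp (-γ * ∑ h ∈ Finset.range n, eulerBeta (1 - a) ((h : ℝ) + β + a)) *
          eulerBeta (2 - a) ((n:ℝ) - 2 + β + a) ^ k := by
      rw [hL]
      congr 1
      simp [Finset.prod_const]
    have hρnn : (0:ℝ) ≤ (((n:ℝ) - 2 + β + a) / (1 - a)) ^ k := by positivity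
    have h1 : ENNReal.ofReal (L (fun _ => 1) a)
        = ENNReal.ofReal ((((n:ℝ) - 2 + β + a) / (1 - a)) ^ k)
            * ENNReal.ofReal (L (fun _ => 2) a) := by
      rw [← ENNReal.ofReal_mul hρnn, hLm1, hLm2, hρ, mul_pow]
      congr 1
      ring
    rw [h1] at hfg
    have hG0 : ENNReal.ofReal (L (fun _ => 2) a) ≠ 0 := by
      rw [Ne, ENNReal.ofReal_eq_zero, not_le]
      exact hLpos (fun _ => 2) hb2 a ha
    have hGt : ENNReal.ofReal (L (fun _ => 2) a) ≠ ∞ := ENNReal.ofReal_ne_top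
    have := congrArg (fun z => z * (ENNReal.ofReal (L (fun _ => 2) a))⁻¹) hfg
    simp only [] at this
    rwa [mul_assoc, mul_assoc, ENNReal.mul_inv_cancel hG0 hGt, mul_one, mul_one] at this
  have hneb : (ae π).NeBot := ae_neBot.2 (IsProbabilityMeasure.ne_zero π)
  obtain ⟨a₀, ha₀, hc₀⟩ := hψ.exists
  refine ⟨a₀, ?_⟩
  have hinj : ∀ a ∈ Set.Ioo (0:ℝ) 1,
      ENNReal.ofReal ((((n:ℝ) - 2 + β + a) / (1 - a)) ^ k) = c → a = a₀ := by
    intro a ha hca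
    have hx : (0:ℝ) < 1 - a := by linarith [ha.2]
    have hy : (0:ℝ) < (n:ℝ) - 2 + β + a := by linarith [ha.1]
    have hx0 : (0:ℝ) < 1 - a₀ := by linarith [ha₀.2]
    have hy0 : (0:ℝ) < (n:ℝ) - 2 + β + a₀ := by linarith [ha₀.1]
    rw [← hc₀, ENNReal.ofReal_eq_ofReal_iff (by positivity) (by positivity)] at hca
    rw [pow_left_inj₀ (by positivity) (by positivity) (by omega)] at hca
    rw [div_eq_div_iff hx.ne' hx0.ne'] at hca
    have h0 : (a - a₀) * ((n:ℝ) - 1 + β) = 0 := by linear_combination hca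
    rcases mul_eq_zero.1 h0 with h | h
    · linarith
    · linarith
  have hone : ∀ᵐ a ∂π, a = a₀ := by
    filter_upwards [hψ] with a haa
    exact hinj a haa.1 haa.2
  have hcompl : π {a₀}ᶜ = 0 := by
    have h := ae_iff.1 hone
    have hsets : {a : ℝ | ¬ a = a₀} = ({a₀}ᶜ : Set ℝ) := by ext x; simp
    rwa [hsets] at h
  ext s hs
  rw [Measure.dirac_apply' _ hs]
  by_cases hmem : a₀ ∈ s
  · have hsub : sᶜ ⊆ ({a₀}ᶜ : Set ℝ) := by
      intro x hx hxa
      rw [Set.mem_singleton_iff] at hxa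
      exact hx (hxa ▸ hmem)
    have h1 : π sᶜ = 0 := le_antisymm ((measure_mono hsub).trans hcompl.le) zero_le
    have h2 := measure_add_measure_compl (μ := π) hs
    rw [h1, add_zero, measure_univ] at h2
    rw [h2, Set.indicator_of_mem hmem, Pi.one_apply]
  · have hsub : s ⊆ ({a₀}ᶜ : Set ℝ) := by
      intro x hx hxa
      rw [Set.mem_singleton_iff] at hxa
      exact hmem (hxa ▸ hx)
    have h1 : π s = 0 := le_antisymm ((measure_mono hsub).trans hcompl.le) zero_le
    rw [h1, Set.indicator_of_notMem hmem]
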